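/- Let H be a real Hilbert space, (R, dist) a metric space, P : R → H an L-Lipschitz map, and let D = P(R) ∪ (−P(R)) be the induced symmetric dictionary, assumed bounded in H. Let u ∈ K₁(D), γ ∈ (0,1), T > 0, and let G ⊆ R be an ε-net of R (for every θ ∈ R there exists θ' ∈ G with dist(θ, θ') ≤ ε), where L·ε·‖u‖_{K₁(D)} ≤ (1 − γ)·T. Let K ⊆ H be a closed subspace, let r = u − P_K u where P_K is the orthogonal projection onto K, and suppose the supremum sup_{g∈D} ⟨g, r⟩ is attained by some element of D. If ‖r‖ > T, then the discretized dictionary D_G = P(G) ∪ (−P(G)) contains an element g with ⟨g, r⟩ ≥ γ·sup_{g'∈D} ⟨g', r⟩; in particular, the greedy selection over D_G realizes a weak greedy step with parameter γ relative to the full dictionary D. -/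

import Mathlib

open RealInnerProductSpace Pointwise

/-- `BOne D` is the closure of the convex symmetric hull of the dictionary `D`:
the closure of the set of finite linear combinations `∑ aᵢ • gᵢ` with `gᵢ ∈ D`
and `∑ |aᵢ| ≤ 1`. -/
noncomputable def BOne {H : Type*} [NormedAddCommGroup H] [InnerProductSpace ℝ H]
    (D : Set H) : Set H :=
  closure {v : H | ∃ (n : ℕ) (a : Fin n → ℝ) (g : Fin n → H),
    (∀ i, g i ∈ D) ∧ (∑ i, |a i|) ≤ 1 ∧ v = ∑ i, a i • g i}

/-- Membership in the variation space `K₁(D)`. -/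
noncomputable def memK1 {H : Type*} [NormedAddCommGroup H] [InnerProductSpace ℝ H]
    (D : Set H) (v : H) : Prop :=
  ∃ c : ℝ, 0 < c ∧ v ∈ c • BOne D

/-- The variation norm `‖v‖_{K₁(D)} = inf {c > 0 : v ∈ c • B₁(D)}`. -/
noncomputable def varNorm {H : Type*} [NormedAddCommGroup H] [InnerProductSpace ℝ H]
    (D : Set H) (v : H) : ℝ :=
  sInf {c : ℝ | 0 < c ∧ v ∈ c • BOne D}

/-- Core of Theorem 5.1: if `G` is a sufficiently fine `ε`-net of the parameter
space `R`, then as long as the residual norm exceeds the threshold `T`, the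
discretized dictionary `P(G) ∪ (−P(G))` contains a weak greedy selection with
parameter `γ` relative to the full dictionary `D = P(R) ∪ (−P(R))`. -/
theorem stmt9 {H : Type*} [NormedAddCommGroup H] [InnerProductSpace ℝ H] [CompleteSpace H]
    {R : Type*} [MetricSpace R]
    (P : R → H) (L : ℝ) (hL : ∀ θ θ' : R, ‖P θ - P θ'‖ ≤ L * dist θ θ')
    (D : Set H) (hD : D = Set.range P ∪ -Set.range P)
    (hbdd : ∃ C : ℝ, ∀ g ∈ D, ‖g‖ ≤ C)
    (u : H) (hu : memK1 D u)
    (γ T ε : ℝ) (hγ : γ ∈ Set.Ioo (0 : ℝ) 1) (hT : 0 < T)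
    (G : Set R) (hG : ∀ θ : R, ∃ θ' ∈ G, dist θ θ' ≤ ε)
    (hε : L * ε * varNorm D u ≤ (1 - γ) * T)
    (K : Submodule ℝ H) [K.HasOrthogonalProjection]
    (r : H) (hr : r = u - (K.orthogonalProjectionOnto u : H))
    (hattain : ∃ g0 ∈ D, ∀ g ∈ D, ⟪g, r⟫ ≤ ⟪g0, r⟫)
    (hbig : T < ‖r‖) :
    ∃ g ∈ P '' G ∪ -(P '' G),
      γ * sSup ((fun g' => ⟪g', r⟫) '' D) ≤ ⟪g, r⟫ := by
  obtain ⟨γpos, γlt⟩ := hγ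
  obtain ⟨g0, hg0D, hg0max⟩ := hattain
  set M := ⟪g0, r⟫ with hMdef
  have hsymm : ∀ g ∈ D, -g ∈ D := by
    intro g hg
    rw [hD] at hg ⊢
    rcases hg with h | h
    · right; simpa [Set.mem_neg] using h
    · left; simpa [Set.mem_neg] using h
  have habs : ∀ g ∈ D, |⟪g, r⟫| ≤ M := by
    intro g hg
    rw [abs_le]
    refine ⟨?_, hg0max g hg⟩
    have := hg0max (-g) (hsymm g hg)
    rw [inner_neg_left] at this
    linarith
  have hM0 : 0 ≤ M := le_trans (abs_nonneg _) (habs g0 hg0D)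
  have hBone : ∀ v ∈ BOne D, ⟪v, r⟫ ≤ M := by
    intro v hv
    have hsub : {v : H | ∃ (n : ℕ) (a : Fin n → ℝ) (g : Fin n → H),
        (∀ i, g i ∈ D) ∧ (∑ i, |a i|) ≤ 1 ∧ v = ∑ i, a i • g i}
        ⊆ {v : H | ⟪v, r⟫ ≤ M} := by
      rintro w ⟨n, a, g, hgD, ha, rfl⟩
      simp only [Set.mem_setOf_eq, sum_inner, real_inner_smul_left]
      calc ∑ i, a i * ⟪g i, r⟫ ≤ ∑ i, |a i| * M := by
            apply Finset.sum_le_sum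
            intro i _
            calc a i * ⟪g i, r⟫ ≤ |a i * ⟪g i, r⟫| := le_abs_self _
              _ = |a i| * |⟪g i, r⟫| := abs_mul _ _
              _ ≤ |a i| * M := mul_le_mul_of_nonneg_left (habs _ (hgD i)) (abs_nonneg _)
        _ = (∑ i, |a i|) * M := by rw [Finset.sum_mul]
        _ ≤ 1 * M := mul_le_mul_of_nonneg_right ha hM0
        _ = M := one_mul M
    have hclosed : IsClosed {v : H | ⟪v, r⟫ ≤ M} :=
      isClosed_le (continuous_id.inner continuous_const) continuous_const
    exact closure_minimal hsub hclosed hv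
  have hortho : ⟪(K.orthogonalProjectionOnto u : H), r⟫ = 0 := by
    have hmem : r ∈ Kᗮ := by
      rw [hr, ← Submodule.starProjection_apply]; exact K.sub_starProjection_mem_orthogonal u
    exact (Submodule.mem_orthogonal K r).mp hmem _ (K.orthogonalProjectionOnto u).2
  have hur : ⟪u, r⟫ = ‖r‖ ^ 2 := by
    have hu' : u = r + (K.orthogonalProjectionOnto u : H) := by rw [hr]; abel
    rw [hu', inner_add_left, hortho, real_inner_self_eq_norm_sq, add_zero]
  have hr0 : 0 < ‖r‖ := lt_trans hT hbig
  have hkey : ∀ c : ℝ, 0 < c → u ∈ c • BOne D → ‖r‖ ^ 2 ≤ c * M := by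
    intro c hc hmem
    obtain ⟨v, hv, hvu⟩ := hmem
    have h1 := hBone v hv
    have h2 : ⟪u, r⟫ = c * ⟪v, r⟫ := by rw [← hvu, real_inner_smul_left]
    have h3 : c * ⟪v, r⟫ ≤ c * M := mul_le_mul_of_nonneg_left h1 hc.le
    linarith
  obtain ⟨c0, hc0, hc0mem⟩ := hu
  have hc0key := hkey c0 hc0 hc0mem
  have hMpos : 0 < M := by nlinarith
  have hVM : ‖r‖ ^ 2 ≤ varNorm D u * M := by
    have hle : ‖r‖ ^ 2 / M ≤ varNorm D u := by
      unfold varNorm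
      apply le_csInf (Set.nonempty_of_mem (show c0 ∈ {c : ℝ | 0 < c ∧ u ∈ c • BOne D} from ⟨hc0, hc0mem⟩))
      rintro c ⟨hc, hcm⟩
      have := hkey c hc hcm
      rw [div_le_iff₀ hMpos]
      linarith
    calc ‖r‖ ^ 2 = (‖r‖ ^ 2 / M) * M := by field_simp
      _ ≤ varNorm D u * M := mul_le_mul_of_nonneg_right hle hMpos.le
  have hbdd' : BddAbove ((fun g' => ⟪g', r⟫) '' D) :=
    ⟨M, by rintro x ⟨g, hg, rfl⟩; exact hg0max g hg⟩
  have hsup : sSup ((fun g' => ⟪g', r⟫) '' D) = M := by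
    apply le_antisymm
    · apply csSup_le (Set.Nonempty.image _ ⟨g0, hg0D⟩)
      rintro x ⟨g, hg, rfl⟩; exact hg0max g hg
    · exact le_csSup hbdd' ⟨g0, hg0D, rfl⟩
  rw [hsup]
  have hfinal : ∀ (g : H) (d : ℝ), d ≤ ε → 0 ≤ d → ‖g - g0‖ ≤ L * d → γ * M ≤ ⟪g, r⟫ := by
    intro g d hdε hd0 hgd
    have hgr : M - ‖g - g0‖ * ‖r‖ ≤ ⟪g, r⟫ := by
      have h1 : ⟪g, r⟫ = M + ⟪g - g0, r⟫ := by rw [inner_sub_left, hMdef]; ring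
      have h2 := abs_le.mp (abs_real_inner_le_norm (g - g0) r)
      linarith [h2.1]
    have hb : ‖g - g0‖ * ‖r‖ ≤ (1 - γ) * M := by
      rcases le_or_gt L 0 with hL0 | hL0
      · have hle0 : ‖g - g0‖ ≤ 0 :=
          le_trans hgd (mul_nonpos_of_nonpos_of_nonneg hL0 hd0)
        have h0 : ‖g - g0‖ = 0 := le_antisymm hle0 (norm_nonneg _)
        rw [h0, zero_mul]
        nlinarith
      · have hε0 : 0 ≤ ε := le_trans hd0 hdε
        have h1 : ‖g - g0‖ ≤ L * ε :=
          le_trans hgd (mul_le_mul_of_nonneg_left hdε hL0.le)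
        have hLε : 0 ≤ L * ε := mul_nonneg hL0.le hε0
        have s1 : (L * ε) * ‖r‖ ^ 2 ≤ (L * ε) * (varNorm D u * M) :=
          mul_le_mul_of_nonneg_left hVM hLε
        have s2 : L * ε * varNorm D u * M ≤ (1 - γ) * T * M :=
          mul_le_mul_of_nonneg_right hε hMpos.le
        have s3 : (1 - γ) * T * M ≤ (1 - γ) * ‖r‖ * M := by nlinarith [mul_nonneg hMpos.le (sub_pos.mpr hbig).le]
        have s4 : (L * ε) * ‖r‖ ≤ (1 - γ) * M := by
          have h5 : (L * ε) * ‖r‖ * ‖r‖ ≤ (1 - γ) * M * ‖r‖ := by nlinarith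
          exact le_of_mul_le_mul_right h5 hr0
        calc ‖g - g0‖ * ‖r‖ ≤ (L * ε) * ‖r‖ :=
              mul_le_mul_of_nonneg_right h1 hr0.le
          _ ≤ (1 - γ) * M := s4
    linarith
  rw [hD] at hg0D
  rcases hg0D with ⟨θ, hθ⟩ | hneg
  · obtain ⟨θ', hθ'G, hdist⟩ := hG θ
    refine ⟨P θ', Or.inl ⟨θ', hθ'G, rfl⟩, ?_⟩
    have hnorm : ‖P θ' - g0‖ ≤ L * dist θ θ' := by
      rw [← hθ, norm_sub_rev]; exact hL θ θ'
    exact hfinal (P θ') (dist θ θ') hdist dist_nonneg hnorm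
  · obtain ⟨θ, hθ⟩ := Set.mem_neg.mp hneg
    obtain ⟨θ', hθ'G, hdist⟩ := hG θ
    refine ⟨-P θ', Or.inr (by simp only [Set.mem_neg, neg_neg]; exact ⟨θ', hθ'G, rfl⟩), ?_⟩
    have hnorm : ‖-P θ' - g0‖ ≤ L * dist θ θ' := by
      have heq : -P θ' - g0 = P θ - P θ' := by rw [hθ]; abel
      rw [heq]; exact hL θ θ'
    exact hfinal (-P θ') (dist θ θ') hdist dist_nonneg hnorm
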